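/- The truncated-mean operator D is monotone for the upshifted likelihood-ratio order: fix b ∈ ℕ and a finite index set; for collections m of finitely supported probability distributions on ℕ with 0 in their supports, define D[m] = Σ_{|x| ≤ b} |x|·Π_i m_i(x_i) / Σ_{|x| ≤ b} Π_i m_i(x_i). If m¹_i ≤_{lr↑} m²_i for all i, then D[m¹] ≤ D[m²]. -/

import Mathlib

/-- `p` is a finitely supported probability distribution on ℕ. -/
def IsDist (p : ℕ → ℝ) : Prop :=
  (∀ x, 0 ≤ p x) ∧ (Function.support p).Finite ∧ ∑' x, p x = 1

/-- Upshifted likelihood-ratio order. -/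
def LRup (p q : ℕ → ℝ) : Prop :=
  ∀ i k l : ℕ, p (i + k + l) * q i ≤ p (i + l) * q (i + k)

/-- The truncated-mean operator with vertex capacity `b`. -/
noncomputable def Dop {ι : Type*} [Fintype ι] (b : ℕ) (m : ι → ℕ → ℝ) : ℝ :=
  (∑' x : ι → ℕ, if (∑ i, x i) ≤ b then ((∑ i, x i : ℕ) : ℝ) * ∏ i, m i (x i) else 0) /
    (∑' x : ι → ℕ, if (∑ i, x i) ≤ b then ∏ i, m i (x i) else 0)

open Finset Polynomial

lemma mem_image_sub {U : Finset ℤ} {k x : ℤ} : x ∈ U.image (· - k) ↔ x + k ∈ U := by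
  simp only [Finset.mem_image]
  constructor
  · rintro ⟨a, ha, rfl⟩; simpa using ha
  · intro h; exact ⟨x + k, h, by ring⟩

lemma set_lemma (s c k : ℤ) (hk : 0 ≤ k) (hsc : s + k ≤ c) (T U : Finset ℤ)
    (hT : ∀ x ∈ T, ∀ y : ℤ, s - x ≤ y → y ≤ x → y ∈ T)
    (hU : ∀ x ∈ U, ∀ y : ℤ, x ≤ y → y ≤ c - x → y ∈ U) :
    (T ∩ U).card ≤ (T ∩ U.image (· - k)).card := by
  classical
  rcases T.eq_empty_or_nonempty with rfl|hTne
  · simp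
  rcases U.eq_empty_or_nonempty with rfl|hUne
  · simp
  set v := T.max' hTne with hv_def
  set u := U.min' hUne with hu_def
  by_cases hv : 2*v < s
  · apply Finset.card_le_card
    intro x hx
    rw [Finset.mem_inter] at hx ⊢
    have hxv : x ≤ v := T.le_max' x hx.1
    exact ⟨hx.1, mem_image_sub.2 (hU x hx.2 (x+k) (by omega) (by omega))⟩
  by_cases hu : c < 2*u
  · apply Finset.card_le_card_of_injOn (fun x => x - k)
    · intro x hx
      rw [Finset.mem_coe, Finset.mem_inter] at hx ⊢
      have h1 : u ≤ x := U.min'_le x hx.2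
      refine ⟨hT x hx.1 (x-k) (by omega) (by omega), mem_image_sub.2 (by simpa using hx.2)⟩
    · intro a _ b _ h
      dsimp only at h; omega
  push_neg at hv hu
  have hvm : v ∈ T := T.max'_mem hTne
  have hum : u ∈ U := U.min'_mem hUne
  set F := T.filter (fun x => x < s - v) with hF_def
  set I := Finset.Icc (s-v) v with hI_def
  set G := U.filter (fun x => c - u < x) with hG_def
  set J := Finset.Icc u (c-u) with hJ_def
  have hTFI : T = F ∪ I := by
    ext x
    simp only [hF_def, hI_def, Finset.mem_union, Finset.mem_filter, Finset.mem_Icc]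
    constructor
    · intro hx
      have : x ≤ v := T.le_max' x hx
      by_cases h : x < s - v
      · exact Or.inl ⟨hx, h⟩
      · exact Or.inr ⟨by omega, this⟩
    · rintro (⟨hx, _⟩|⟨h1, h2⟩)
      · exact hx
      · exact hT v hvm x h1 h2
  have hUGJ : U = G ∪ J := by
    ext x
    simp only [hG_def, hJ_def, Finset.mem_union, Finset.mem_filter, Finset.mem_Icc]
    constructor
    · intro hx
      have : u ≤ x := U.min'_le x hx
      by_cases h : c - u < x
      · exact Or.inl ⟨hx, h⟩
      · exact Or.inr ⟨this, by omega⟩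
    · rintro (⟨hx, _⟩|⟨h1, h2⟩)
      · exact hx
      · exact hU u hum x h1 h2
  have hJk : J.image (· - k) = Finset.Icc (u-k) (c-u-k) := by
    ext x
    simp only [mem_image_sub, hJ_def, Finset.mem_Icc]
    omega
  -- decompositions
  have hdisjFI : ∀ X : Finset ℤ, Disjoint (F ∩ X) (I ∩ X) := by
    intro X
    rw [Finset.disjoint_left]
    intro a ha hb
    simp only [hF_def, hI_def, Finset.mem_inter, Finset.mem_filter, Finset.mem_Icc] at ha hb
    omega
  have hdisjGJ : ∀ X : Finset ℤ, Disjoint (X ∩ G) (X ∩ J) := by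
    intro X
    rw [Finset.disjoint_left]
    intro a ha hb
    simp only [hG_def, hJ_def, Finset.mem_inter, Finset.mem_filter, Finset.mem_Icc] at ha hb
    omega
  have hdisjGJk : Disjoint (T ∩ G.image (· - k)) (T ∩ J.image (· - k)) := by
    rw [Finset.disjoint_left]
    intro a ha hb
    simp only [Finset.mem_inter, mem_image_sub] at ha hb
    have h1 := ha.2; have h2 := hb.2
    simp only [hG_def, hJ_def, Finset.mem_filter, Finset.mem_Icc] at h1 h2
    omega
  have e1 : (T ∩ U).card = (T ∩ G).card + (T ∩ J).card := by
    rw [hUGJ, Finset.inter_union_distrib_left, Finset.card_union_of_disjoint (hdisjGJ T)]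
  have e2 : (T ∩ U.image (· - k)).card
      = (T ∩ G.image (· - k)).card + (T ∩ J.image (· - k)).card := by
    rw [hUGJ, Finset.image_union, Finset.inter_union_distrib_left,
      Finset.card_union_of_disjoint hdisjGJk]
  -- G piece
  have hGpiece : (T ∩ G).card ≤ (T ∩ G.image (· - k)).card := by
    apply Finset.card_le_card_of_injOn (fun x => x - k)
    · intro x hx
      rw [Finset.mem_coe, Finset.mem_inter] at hx ⊢
      obtain ⟨hxT, hxG⟩ := hx
      have hx2 : c - u < x := by
        have h' := hxG
        rw [hG_def, Finset.mem_filter] at h'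
        exact h'.2
      refine ⟨hT x hxT (x-k) (by omega) (by omega), ?_⟩
      rw [mem_image_sub]
      simpa using hxG
    · intro a _ b _ h
      dsimp only at h; omega
  -- J piece
  have hJpiece : (T ∩ J).card ≤ (T ∩ J.image (· - k)).card := by
    have eT1 : T ∩ J = (F ∩ J) ∪ (I ∩ J) := by
      rw [hTFI, Finset.union_inter_distrib_right]
    have eT2 : T ∩ J.image (· - k) = (F ∩ J.image (· - k)) ∪ (I ∩ J.image (· - k)) := by
      rw [hTFI, Finset.union_inter_distrib_right]
    rw [eT1, eT2, Finset.card_union_of_disjoint (hdisjFI J),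
      Finset.card_union_of_disjoint (hdisjFI (J.image (· - k)))]
    have hFpart : (F ∩ J).card ≤ (F ∩ J.image (· - k)).card := by
      apply Finset.card_le_card
      intro x hx
      simp only [Finset.mem_inter, hJk, hF_def, Finset.mem_filter, Finset.mem_Icc,
        hJ_def] at hx ⊢
      obtain ⟨⟨hxT, hxlt⟩, hxJ⟩ := hx
      exact ⟨⟨hxT, hxlt⟩, by simp only [mem_image_sub, hJ_def, Finset.mem_Icc]; omega⟩
    have hIpart : (I ∩ J).card ≤ (I ∩ J.image (· - k)).card := by
      have h1 : I ∩ J = Finset.Icc (max (s-v) u) (min v (c-u)) := by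
        ext x
        simp only [hI_def, hJ_def, Finset.mem_inter, Finset.mem_Icc]
        omega
      have h2 : I ∩ J.image (· - k) = Finset.Icc (max (s-v) (u-k)) (min v (c-u-k)) := by
        ext x
        simp only [hI_def, hJk, Finset.mem_inter, Finset.mem_Icc]
        omega
      rw [h1, h2, Int.card_Icc, Int.card_Icc]
      omega
    omega
  omega

lemma star_ind (s c k : ℤ) (hk : 0 ≤ k) (hsc : s + k ≤ c) :
    ∀ (n : ℕ) (g : ℤ → ℝ) (U : Finset ℤ), U.card ≤ n →
    (∀ x ∉ U, g x = 0) → (∀ x, 0 ≤ g x) →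
    (∀ x y : ℤ, x ≤ y → y ≤ c - x → g x ≤ g y) →
    ∀ (T : Finset ℤ), (∀ x ∈ T, ∀ y : ℤ, s - x ≤ y → y ≤ x → y ∈ T) →
    ∑ x ∈ T, g x ≤ ∑ x ∈ T, g (x + k) := by
  intro n
  induction n with
  | zero =>
    intro g U hcard hgU hg0 hG T hT
    have hz : ∀ x, g x = 0 := by
      intro x
      by_cases h : x ∈ U
      · exact absurd (Finset.card_pos.2 ⟨x, h⟩) (by omega)
      · exact hgU x h
    simp [hz]
  | succ n IH =>
    intro g U hcard hgU hg0 hG T hT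
    classical
    set U' := U.filter (fun x => g x ≠ 0) with hU'_def
    have hsupp : ∀ x, g x ≠ 0 → x ∈ U' := by
      intro x hx
      by_cases h : x ∈ U
      · exact Finset.mem_filter.2 ⟨h, hx⟩
      · exact absurd (hgU x h) hx
    rcases U'.eq_empty_or_nonempty with hE|hNE
    · have hz : ∀ x, g x = 0 := by
        intro x
        by_contra hgx
        have := hsupp x hgx
        rw [hE] at this
        exact absurd this (Finset.notMem_empty x)
      simp [hz]
    · set ν := U'.inf' hNE g with hν_def
      obtain ⟨x₀, hx₀U, hx₀⟩ := U'.exists_mem_eq_inf' hNE g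
      have hx₀g : g x₀ ≠ 0 := (Finset.mem_filter.1 hx₀U).2
      have hν_pos : 0 < ν := by
        rw [hν_def, hx₀]
        exact lt_of_le_of_ne (hg0 x₀) (Ne.symm hx₀g)
      have hν_le : ∀ x ∈ U', ν ≤ g x := fun x hx => Finset.inf'_le g hx
      set g' : ℤ → ℝ := fun x => g x - (if x ∈ U' then ν else 0) with hg'_def
      have hg'0 : ∀ x, 0 ≤ g' x := by
        intro x
        simp only [hg'_def]
        split_ifs with h
        · linarith [hν_le x h]
        · linarith [hg0 x]
      have hG' : ∀ x y : ℤ, x ≤ y → y ≤ c - x → g' x ≤ g' y := by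
        intro x y hxy hyc
        by_cases hx : g x = 0
        · have : g' x = 0 := by
            simp only [hg'_def]
            have : x ∉ U' := fun h => (Finset.mem_filter.1 h).2 hx
            simp [this, hx]
          rw [this]; exact hg'0 y
        · have hxU : x ∈ U' := hsupp x hx
          have hgy : g x ≤ g y := hG x y hxy hyc
          have hy : g y ≠ 0 := by
            have := lt_of_le_of_ne (hg0 x) (Ne.symm hx)
            intro h; rw [h] at hgy; linarith
          have hyU : y ∈ U' := hsupp y hy
          simp only [hg'_def, if_pos hxU, if_pos hyU]
          linarith
      have hU'closed : ∀ x ∈ U', ∀ y : ℤ, x ≤ y → y ≤ c - x → y ∈ U' := by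
        intro x hx y hxy hyc
        have hgx : g x ≠ 0 := (Finset.mem_filter.1 hx).2
        have hgy : g x ≤ g y := hG x y hxy hyc
        have : g y ≠ 0 := by
          have := lt_of_le_of_ne (hg0 x) (Ne.symm hgx)
          intro h; rw [h] at hgy; linarith
        exact hsupp y this
      -- decompose sums
      have hdecomp : ∀ z : ℤ, g z = g' z + (if z ∈ U' then ν else 0) := by
        intro z; simp [hg'_def]
      have hsum1 : ∑ x ∈ T, g x = ∑ x ∈ T, g' x + ν * ((T ∩ U').card : ℝ) := by
        calc ∑ x ∈ T, g x = ∑ x ∈ T, (g' x + (if x ∈ U' then ν else 0)) :=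
              Finset.sum_congr rfl (fun x _ => hdecomp x)
        _ = ∑ x ∈ T, g' x + ∑ x ∈ T, (if x ∈ U' then ν else 0) := Finset.sum_add_distrib
        _ = ∑ x ∈ T, g' x + ν * ((T ∩ U').card : ℝ) := by
              rw [Finset.sum_ite_mem]
              rw [Finset.sum_const, nsmul_eq_mul, mul_comm]
      have hsum2 : ∑ x ∈ T, g (x + k)
          = ∑ x ∈ T, g' (x + k) + ν * ((T ∩ U'.image (· - k)).card : ℝ) := by
        calc ∑ x ∈ T, g (x + k)
            = ∑ x ∈ T, (g' (x + k) + (if x ∈ U'.image (· - k) then ν else 0)) := by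
              refine Finset.sum_congr rfl (fun x _ => ?_)
              rw [hdecomp (x + k)]
              congr 1
              exact if_congr mem_image_sub.symm rfl rfl
        _ = ∑ x ∈ T, g' (x + k) + ∑ x ∈ T, (if x ∈ U'.image (· - k) then ν else 0) :=
              Finset.sum_add_distrib
        _ = _ := by rw [Finset.sum_ite_mem, Finset.sum_const, nsmul_eq_mul, mul_comm]
      -- IH for g'
      have hg'U : ∀ x ∉ U'.erase x₀, g' x = 0 := by
        intro x hx
        rw [Finset.mem_erase] at hx
        push_neg at hx
        by_cases hxU : x ∈ U'
        · have hxx : x = x₀ := by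
            by_contra hne
            exact hx hne hxU
          simp only [hg'_def, hxx, hν_def, hx₀, if_pos hx₀U, sub_self]
        · have hgx : g x = 0 := by
            by_contra hgx
            exact hxU (hsupp x hgx)
          simp [hg'_def, hxU, hgx]
      have hIH := IH g' (U'.erase x₀) (by
          have h1 : U'.card ≤ U.card := Finset.card_filter_le _ _
          have h2 : (U'.erase x₀).card = U'.card - 1 := Finset.card_erase_of_mem hx₀U
          have h3 : 1 ≤ U'.card := Finset.card_pos.2 ⟨x₀, hx₀U⟩
          omega) hg'U hg'0 hG' T hT
      have hset : ((T ∩ U').card : ℝ) ≤ ((T ∩ U'.image (· - k)).card : ℝ) := by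
        exact_mod_cast set_lemma s c k hk hsc T U' hT hU'closed
      rw [hsum1, hsum2]
      have hmul := mul_le_mul_of_nonneg_left hset (le_of_lt hν_pos)
      linarith

lemma star_sum_le (s c k : ℤ) (hk : 0 ≤ k) (hsc : s + k ≤ c) (A : Finset ℤ) :
    ∀ (n : ℕ) (f g : ℤ → ℝ) (U : Finset ℤ), (A.filter (fun x => f x ≠ 0)).card ≤ n →
    (∀ x ∉ A, f x = 0) → (∀ x, 0 ≤ f x) →
    (∀ x y : ℤ, s - x ≤ y → y ≤ x → f x ≤ f y) →
    (∀ x ∉ U, g x = 0) → (∀ x, 0 ≤ g x) →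
    (∀ x y : ℤ, x ≤ y → y ≤ c - x → g x ≤ g y) →
    ∑ x ∈ A, f x * g x ≤ ∑ x ∈ A, f x * g (x + k) := by
  intro n
  induction n with
  | zero =>
    intro f g U hcard hfA hf0 hF hgU hg0 hG
    have hz : ∀ x ∈ A, f x = 0 := by
      intro x hx
      by_contra hfx
      have h0 : A.filter (fun x => f x ≠ 0) = ∅ := Finset.card_eq_zero.1 (Nat.le_zero.1 hcard)
      have hmem : x ∈ A.filter (fun x => f x ≠ 0) := Finset.mem_filter.2 ⟨hx, hfx⟩
      rw [h0] at hmem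
      exact absurd hmem (Finset.notMem_empty x)
    calc ∑ x ∈ A, f x * g x = 0 := by
          apply Finset.sum_eq_zero; intro x hx; rw [hz x hx]; ring
    _ ≤ ∑ x ∈ A, f x * g (x + k) := by
          apply Finset.sum_nonneg; intro x hx
          exact mul_nonneg (hf0 x) (hg0 _)
  | succ n IH =>
    intro f g U hcard hfA hf0 hF hgU hg0 hG
    classical
    set T := A.filter (fun x => f x ≠ 0) with hT_def
    have hsupp : ∀ x, f x ≠ 0 → x ∈ T := by
      intro x hx
      by_cases h : x ∈ A
      · exact Finset.mem_filter.2 ⟨h, hx⟩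
      · exact absurd (hfA x h) hx
    rcases T.eq_empty_or_nonempty with hE|hNE
    · have hz : ∀ x, f x = 0 := by
        intro x
        by_contra hfx
        have := hsupp x hfx
        rw [hE] at this
        exact absurd this (Finset.notMem_empty x)
      calc ∑ x ∈ A, f x * g x = 0 := by
            apply Finset.sum_eq_zero; intro x _; rw [hz x]; ring
      _ ≤ ∑ x ∈ A, f x * g (x + k) := by
            apply Finset.sum_nonneg; intro x _
            exact mul_nonneg (hf0 x) (hg0 _)
    · set μ := T.inf' hNE f with hμ_def
      obtain ⟨x₀, hx₀T, hx₀⟩ := T.exists_mem_eq_inf' hNE f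
      have hx₀f : f x₀ ≠ 0 := (Finset.mem_filter.1 hx₀T).2
      have hμ_pos : 0 < μ := by
        rw [hμ_def, hx₀]
        exact lt_of_le_of_ne (hf0 x₀) (Ne.symm hx₀f)
      have hμ_le : ∀ x ∈ T, μ ≤ f x := fun x hx => Finset.inf'_le f hx
      set f' : ℤ → ℝ := fun x => f x - (if x ∈ T then μ else 0) with hf'_def
      have hf'0 : ∀ x, 0 ≤ f' x := by
        intro x
        simp only [hf'_def]
        split_ifs with h
        · linarith [hμ_le x h]
        · linarith [hf0 x]
      have hF' : ∀ x y : ℤ, s - x ≤ y → y ≤ x → f' x ≤ f' y := by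
        intro x y hxy hyx
        by_cases hx : f x = 0
        · have : f' x = 0 := by
            simp only [hf'_def]
            have : x ∉ T := fun h => (Finset.mem_filter.1 h).2 hx
            simp [this, hx]
          rw [this]; exact hf'0 y
        · have hxT : x ∈ T := hsupp x hx
          have hfy : f x ≤ f y := hF x y hxy hyx
          have hy : f y ≠ 0 := by
            have := lt_of_le_of_ne (hf0 x) (Ne.symm hx)
            intro h; rw [h] at hfy; linarith
          have hyT : y ∈ T := hsupp y hy
          simp only [hf'_def, if_pos hxT, if_pos hyT]
          linarith
      have hTclosed : ∀ x ∈ T, ∀ y : ℤ, s - x ≤ y → y ≤ x → y ∈ T := by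
        intro x hx y h1 h2
        have hfx : f x ≠ 0 := (Finset.mem_filter.1 hx).2
        have hfy : f x ≤ f y := hF x y h1 h2
        have : f y ≠ 0 := by
          have := lt_of_le_of_ne (hf0 x) (Ne.symm hfx)
          intro h; rw [h] at hfy; linarith
        exact hsupp y this
      have hf'A : ∀ x ∉ A, f' x = 0 := by
        intro x hx
        have h1 : f x = 0 := hfA x hx
        have h2 : x ∉ T := by
          rw [hT_def]
          intro h
          exact hx (Finset.mem_filter.1 h).1
        simp [hf'_def, h1, h2]
      have hdecomp : ∀ z : ℤ, f z = f' z + (if z ∈ T then μ else 0) := by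
        intro z; simp [hf'_def]
      have hTA : T ⊆ A := Finset.filter_subset _ _
      have hsplit : ∀ h : ℤ → ℝ, ∑ x ∈ A, f x * h x
          = ∑ x ∈ A, f' x * h x + μ * ∑ x ∈ T, h x := by
        intro h
        calc ∑ x ∈ A, f x * h x
            = ∑ x ∈ A, (f' x * h x + (if x ∈ T then μ * h x else 0)) := by
              refine Finset.sum_congr rfl (fun x _ => ?_)
              rw [hdecomp x]
              split_ifs with hxT <;> ring
        _ = ∑ x ∈ A, f' x * h x + ∑ x ∈ A, (if x ∈ T then μ * h x else 0) :=
              Finset.sum_add_distrib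
        _ = ∑ x ∈ A, f' x * h x + μ * ∑ x ∈ T, h x := by
              rw [Finset.sum_ite_mem, Finset.mul_sum]
              congr 1
              rw [Finset.inter_eq_right.2 hTA]
      -- f' support strictly smaller
      have hcard' : (A.filter (fun x => f' x ≠ 0)).card ≤ n := by
        have hsub : A.filter (fun x => f' x ≠ 0) ⊆ T.erase x₀ := by
          intro x hx
          obtain ⟨hxA, hxf'⟩ := Finset.mem_filter.1 hx
          have hxT : x ∈ T := by
            by_contra hxT
            apply hxf'
            have : f x = 0 := by
              by_contra hfx
              exact hxT (hsupp x hfx)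
            simp [hf'_def, hxT, this]
          refine Finset.mem_erase.2 ⟨?_, hxT⟩
          intro hxx
          apply hxf'
          rw [hxx]
          simp only [hf'_def, hμ_def, hx₀, if_pos hx₀T, sub_self]
        have h1 := Finset.card_le_card hsub
        have h2 : (T.erase x₀).card = T.card - 1 := Finset.card_erase_of_mem hx₀T
        have h3 : 1 ≤ T.card := Finset.card_pos.2 ⟨x₀, hx₀T⟩
        have h4 : T.card ≤ n + 1 := hcard
        omega
      have hIH := IH f' g U hcard' hf'A hf'0 hF' hgU hg0 hG
      have hind := star_ind s c k hk hsc U.card g U le_rfl hgU hg0 hG T hTclosed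
      rw [hsplit (fun x => g x), hsplit (fun x => g (x + k))]
      have := mul_le_mul_of_nonneg_left hind (le_of_lt hμ_pos)
      linarith

noncomputable def zext (p : ℕ → ℝ) : ℤ → ℝ := fun z => if 0 ≤ z then p z.toNat else 0

lemma zext_nonneg (p : ℕ → ℝ) (hp : ∀ n, 0 ≤ p n) (z : ℤ) : 0 ≤ zext p z := by
  unfold zext; split
  · exact hp _
  · exact le_refl 0

lemma zext_nat (p : ℕ → ℝ) (z : ℤ) (hz : 0 ≤ z) : zext p z = p z.toNat := if_pos hz

lemma zext_neg (p : ℕ → ℝ) (z : ℤ) (hz : z < 0) : zext p z = 0 := if_neg (by omega)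

lemma zext_big (p : ℕ → ℝ) (B : ℕ) (hp : ∀ n, B < n → p n = 0) (z : ℤ) (hz : (B:ℤ) < z) :
    zext p z = 0 := by
  rw [zext_nat p z (by omega)]
  exact hp _ (by omega)

lemma window_eq (F : ℤ → ℝ) (B1 B2 : ℤ) (h12 : B1 ≤ B2) (hF : ∀ a, B1 < a → F a = 0) :
    ∑ a ∈ Finset.Icc (0:ℤ) B2, F a = ∑ a ∈ Finset.Icc (0:ℤ) B1, F a := by
  symm
  apply Finset.sum_subset (Finset.Icc_subset_Icc le_rfl h12)
  intro x hx hnx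
  simp only [Finset.mem_Icc] at hx hnx
  exact hF x (by omega)

lemma sum_antidiag_eq (r R : ℕ → ℝ) (B n : ℕ) (hr : ∀ j, B < j → r j = 0) :
    ∑ x ∈ Finset.HasAntidiagonal.antidiagonal n, r x.1 * R x.2
      = ∑ a ∈ Finset.Icc (0:ℤ) (B:ℤ), zext r a * zext R ((n:ℤ) - a) := by
  rw [Finset.Nat.sum_antidiagonal_eq_sum_range_succ_mk]
  have e1 : ∑ j ∈ Finset.range (n+1), r j * R (n - j)
      = ∑ a ∈ Finset.Icc (0:ℤ) (n:ℤ), zext r a * zext R ((n:ℤ) - a) := by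
    refine Finset.sum_nbij' (i := fun (j:ℕ) => (j:ℤ)) (j := fun (a:ℤ) => a.toNat) ?_ ?_ ?_ ?_ ?_
    · intro j hj
      simp only [Finset.mem_range] at hj
      simp only [Finset.mem_Icc]
      omega
    · intro a ha
      simp only [Finset.mem_Icc] at ha
      simp only [Finset.mem_range]
      omega
    · intro j _; simp
    · intro a ha
      simp only [Finset.mem_Icc] at ha
      omega
    · intro j hj
      simp only [Finset.mem_range] at hj
      rw [zext_nat r _ (by omega), zext_nat R _ (by omega)]
      congr 2
      all_goals omega
  rw [e1]
  rcases le_total (n:ℤ) (B:ℤ) with h|h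
  · rw [window_eq (fun a => zext r a * zext R ((n:ℤ) - a)) (n:ℤ) (B:ℤ) h]
    intro a ha
    rw [zext_neg R _ (by omega), mul_zero]
  · rw [← window_eq (fun a => zext r a * zext R ((n:ℤ) - a)) (B:ℤ) (n:ℤ) h]
    intro a ha
    rw [zext_big r B hr a (by omega), zero_mul]

lemma conv_LRup (p q P Q : ℕ → ℝ) (B : ℕ)
    (hp0 : ∀ n, 0 ≤ p n) (hq0 : ∀ n, 0 ≤ q n) (hP0 : ∀ n, 0 ≤ P n) (hQ0 : ∀ n, 0 ≤ Q n)
    (hpB : ∀ n, B < n → p n = 0) (hqB : ∀ n, B < n → q n = 0)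
    (hPB : ∀ n, B < n → P n = 0) (hQB : ∀ n, B < n → Q n = 0)
    (hpq : LRup p q) (hPQ : LRup P Q) :
    LRup (fun n => ∑ x ∈ Finset.HasAntidiagonal.antidiagonal n, p x.1 * P x.2)
          (fun n => ∑ x ∈ Finset.HasAntidiagonal.antidiagonal n, q x.1 * Q x.2) := by
  intro i k l
  classical
  set A : Finset ℤ := Finset.Icc (0:ℤ) (B:ℤ) with hA_def
  set S : Finset ℤ := Finset.Icc (0:ℤ) (2*(B:ℤ)) with hS_def
  set M : ℤ := (i:ℤ) + k + l with hM_def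
  -- rewrite the four values
  simp only
  rw [sum_antidiag_eq p P B (i+k+l) hpB, sum_antidiag_eq q Q B i hqB,
    sum_antidiag_eq p P B (i+l) hpB, sum_antidiag_eq q Q B (i+k) hqB]
  push_cast
  -- inner shift lemma
  have shift : ∀ (J a : ℤ), 0 ≤ a → a ≤ (B:ℤ) →
      ∑ b ∈ A, zext q b * zext Q (J - b)
        = ∑ s ∈ S, zext q (s - a) * zext Q (J - (s - a)) := by
    intro J a ha1 ha2
    have e1 : ∑ s ∈ Finset.Icc (0 + a) ((B:ℤ) + a), zext q (s - a) * zext Q (J - (s - a))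
        = ∑ b ∈ A, zext q b * zext Q (J - b) := by
      rw [← Finset.map_add_right_Icc 0 (B:ℤ) a, Finset.sum_map]
      refine Finset.sum_congr rfl (fun b _ => ?_)
      simp [addRightEmbedding]
    have e2 : ∑ s ∈ S, zext q (s - a) * zext Q (J - (s - a))
        = ∑ s ∈ Finset.Icc (0 + a) ((B:ℤ) + a), zext q (s - a) * zext Q (J - (s - a)) := by
      symm
      apply Finset.sum_subset
      · apply Finset.Icc_subset_Icc <;> omega
      · intro x hx hnx
        simp only [hS_def, Finset.mem_Icc] at hx hnx
        rcases lt_or_ge x a with h|h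
        · rw [zext_neg q _ (by omega), zero_mul]
        · rw [zext_big q B hqB _ (by omega), zero_mul]
    rw [e2]; exact e1.symm
  -- expand LHS into double sum
  have expand : ∀ (Mp J : ℤ),
      (∑ a ∈ A, zext p a * zext P (Mp - a)) * (∑ b ∈ A, zext q b * zext Q (J - b))
        = ∑ s ∈ S, ∑ a ∈ A,
            (zext p a * zext q (s - a)) * (zext P (Mp - a) * zext Q (J - s + a)) := by
    intro Mp J
    rw [Finset.sum_mul]
    have e3 : ∀ a ∈ A, (zext p a * zext P (Mp - a)) * (∑ b ∈ A, zext q b * zext Q (J - b))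
        = ∑ s ∈ S, (zext p a * zext q (s - a)) * (zext P (Mp - a) * zext Q (J - s + a)) := by
      intro a ha
      simp only [hA_def, Finset.mem_Icc] at ha
      rw [shift J a ha.1 ha.2, Finset.mul_sum]
      refine Finset.sum_congr rfl (fun s _ => ?_)
      rw [show J - (s - a) = J - s + a by ring]
      ring
    rw [Finset.sum_congr rfl e3]
    exact Finset.sum_comm
  rw [expand, expand]
  apply Finset.sum_le_sum
  intro s hs
  -- apply star with f_s, g_s
  set f : ℤ → ℝ := fun a => zext p a * zext q (s - a) with hf_def
  set g : ℤ → ℝ := fun a => zext P (M - a) * zext Q ((i:ℤ) - s + a) with hg_def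
  have goalEq1 : ∀ a : ℤ, (zext p a * zext q (s - a)) * (zext P (M - a) * zext Q ((i:ℤ) - s + a))
      = f a * g a := fun a => rfl
  have goalEq2 : ∀ a : ℤ, (zext p a * zext q (s - a)) * (zext P ((i:ℤ) + l - a) * zext Q ((i:ℤ) + k - s + a))
      = f a * g (a + k) := by
    intro a
    simp only [hf_def, hg_def]
    rw [show M - (a + (k:ℤ)) = (i:ℤ) + l - a by rw [hM_def]; ring,
      show (i:ℤ) - s + (a + k) = (i:ℤ) + k - s + a by ring]
  have main : ∑ a ∈ A, f a * g a ≤ ∑ a ∈ A, f a * g (a + k) := by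
    apply star_sum_le s (s + k + l) k (by positivity) (by omega) A
      ((A.filter (fun x => f x ≠ 0)).card) f g (Finset.Icc (M - B) M) le_rfl
    · intro x hx
      simp only [hA_def, Finset.mem_Icc, not_and_or, not_le] at hx
      rcases hx with h|h
      · rw [hf_def]; dsimp only; rw [zext_neg p _ h, zero_mul]
      · rw [hf_def]; dsimp only; rw [zext_big p B hpB _ h, zero_mul]
    · intro x
      exact mul_nonneg (zext_nonneg p hp0 _) (zext_nonneg q hq0 _)
    · -- hF
      intro x y h1 h2
      rcases lt_or_ge x 0 with hx|hx
      · rw [hf_def]; dsimp only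
        rw [zext_neg p x hx, zero_mul]
        exact mul_nonneg (zext_nonneg p hp0 _) (zext_nonneg q hq0 _)
      rcases lt_or_ge (s - x) 0 with hsx|hsx
      · rw [hf_def]; dsimp only
        rw [zext_neg q _ hsx, mul_zero]
        exact mul_nonneg (zext_nonneg p hp0 _) (zext_nonneg q hq0 _)
      · have hy0 : 0 ≤ y := by omega
        have hsy0 : 0 ≤ s - y := by omega
        have key := hpq (s - x).toNat (x - y).toNat (y - (s - x)).toNat
        rw [show (s-x).toNat + (x-y).toNat + (y-(s-x)).toNat = x.toNat by omega,
          show (s-x).toNat + (y-(s-x)).toNat = y.toNat by omega,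
          show (s-x).toNat + (x-y).toNat = (s-y).toNat by omega] at key
        rw [hf_def]; dsimp only
        rw [zext_nat p x hx, zext_nat q _ hsx, zext_nat p y hy0, zext_nat q _ hsy0]
        exact key
    · -- hgU
      intro x hx
      simp only [Finset.mem_Icc, not_and_or, not_le] at hx
      rcases hx with h|h
      · rw [hg_def]; dsimp only; rw [zext_big P B hPB _ (by omega), zero_mul]
      · rw [hg_def]; dsimp only; rw [zext_neg P _ (by omega), zero_mul]
    · intro x
      exact mul_nonneg (zext_nonneg P hP0 _) (zext_nonneg Q hQ0 _)
    · -- hG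
      intro x y h1 h2
      rcases lt_or_ge (M - x) 0 with hx|hx
      · rw [hg_def]; dsimp only
        rw [zext_neg P _ hx, zero_mul]
        exact mul_nonneg (zext_nonneg P hP0 _) (zext_nonneg Q hQ0 _)
      rcases lt_or_ge ((i:ℤ) - s + x) 0 with hsx|hsx
      · rw [hg_def]; dsimp only
        rw [zext_neg Q _ hsx, mul_zero]
        exact mul_nonneg (zext_nonneg P hP0 _) (zext_nonneg Q hQ0 _)
      · have hMy : 0 ≤ M - y := by omega
        have hisy : 0 ≤ (i:ℤ) - s + y := by omega
        have key := hPQ ((i:ℤ) - s + x).toNat (y - x).toNat ((s + k + l) - x - y).toNat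
        rw [show ((i:ℤ)-s+x).toNat + (y-x).toNat + ((s+k+l)-x-y).toNat = (M-x).toNat by omega,
          show ((i:ℤ)-s+x).toNat + ((s+k+l)-x-y).toNat = (M-y).toNat by omega,
          show ((i:ℤ)-s+x).toNat + (y-x).toNat = ((i:ℤ)-s+y).toNat by omega] at key
        rw [hg_def]; dsimp only
        rw [zext_nat P _ hx, zext_nat Q _ hsx, zext_nat P _ hMy, zext_nat Q _ hisy]
        exact key
  calc ∑ a ∈ A, (zext p a * zext q (s - a)) * (zext P (M - a) * zext Q ((i:ℤ) - s + a))
      = ∑ a ∈ A, f a * g a := Finset.sum_congr rfl (fun a _ => goalEq1 a)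
  _ ≤ ∑ a ∈ A, f a * g (a + k) := main
  _ = _ := (Finset.sum_congr rfl (fun a _ => (goalEq2 a).symm))

/-- 1-D truncated mean comparison from plain LR. -/
lemma mean_mono (u v : ℕ → ℝ) (b : ℕ)
    (hlr : ∀ n m : ℕ, m ≤ n → u n * v m ≤ u m * v n) :
    (∑ n ∈ Finset.range (b+1), (n:ℝ) * u n) * (∑ n ∈ Finset.range (b+1), v n)
      ≤ (∑ n ∈ Finset.range (b+1), (n:ℝ) * v n) * (∑ n ∈ Finset.range (b+1), u n) := by
  set R := Finset.range (b+1) with hR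
  have key : ∀ n m : ℕ, 0 ≤ ((n:ℝ) - m) * (v n * u m - u n * v m) := by
    intro n m
    rcases le_total m n with h|h
    · apply mul_nonneg
      · have : (m:ℝ) ≤ n := by exact_mod_cast h
        linarith
      · linarith [hlr n m h]
    · apply mul_nonneg_of_nonpos_of_nonpos
      · have : (n:ℝ) ≤ m := by exact_mod_cast h
        linarith
      · linarith [hlr m n h]
  have hsum : 0 ≤ ∑ n ∈ R, ∑ m ∈ R, ((n:ℝ) - m) * (v n * u m - u n * v m) :=
    Finset.sum_nonneg fun n _ => Finset.sum_nonneg fun m _ => key n m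
  have h1 : ∑ n ∈ R, ∑ m ∈ R, ((n:ℝ) * v n) * (u m)
      = (∑ n ∈ R, (n:ℝ) * v n) * (∑ n ∈ R, u n) := (Finset.sum_mul_sum R R _ _).symm
  have h2 : ∑ n ∈ R, ∑ m ∈ R, ((n:ℝ) * u n) * (v m)
      = (∑ n ∈ R, (n:ℝ) * u n) * (∑ n ∈ R, v n) := (Finset.sum_mul_sum R R _ _).symm
  have h3 : ∑ n ∈ R, ∑ m ∈ R, (v n) * ((m:ℝ) * u m)
      = (∑ n ∈ R, v n) * (∑ n ∈ R, (n:ℝ) * u n) := (Finset.sum_mul_sum R R _ _).symm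
  have h4 : ∑ n ∈ R, ∑ m ∈ R, (u n) * ((m:ℝ) * v m)
      = (∑ n ∈ R, u n) * (∑ n ∈ R, (n:ℝ) * v n) := (Finset.sum_mul_sum R R _ _).symm
  have expand : ∑ n ∈ R, ∑ m ∈ R, ((n:ℝ) - m) * (v n * u m - u n * v m)
      = ((∑ n ∈ R, (n:ℝ) * v n) * (∑ n ∈ R, u n) - (∑ n ∈ R, (n:ℝ) * u n) * (∑ n ∈ R, v n))
        - ((∑ n ∈ R, v n) * (∑ n ∈ R, (n:ℝ) * u n) - (∑ n ∈ R, u n) * (∑ n ∈ R, (n:ℝ) * v n)) := by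
    rw [← h1, ← h2, ← h3, ← h4]
    rw [← Finset.sum_sub_distrib, ← Finset.sum_sub_distrib, ← Finset.sum_sub_distrib]
    refine Finset.sum_congr rfl (fun n _ => ?_)
    rw [← Finset.sum_sub_distrib, ← Finset.sum_sub_distrib, ← Finset.sum_sub_distrib]
    refine Finset.sum_congr rfl (fun m _ => ?_)
    ring
  nlinarith [hsum, expand]

noncomputable def truncPoly (f : ℕ → ℝ) (b : ℕ) : Polynomial ℝ :=
  ∑ j ∈ Finset.range (b+1), Polynomial.C (f j) * Polynomial.X ^ j

lemma truncPoly_coeff (f : ℕ → ℝ) (b n : ℕ) :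
    (truncPoly f b).coeff n = if n ≤ b then f n else 0 := by
  unfold truncPoly
  rw [Polynomial.finset_sum_coeff]
  simp only [Polynomial.coeff_C_mul, Polynomial.coeff_X_pow, mul_ite, mul_one, mul_zero]
  rw [Finset.sum_ite_eq (Finset.range (b+1)) n (fun j => f j)]
  simp [Nat.lt_succ_iff]

lemma truncPoly_coeff_nonneg (f : ℕ → ℝ) (b : ℕ) (hf : ∀ n, 0 ≤ f n) (n : ℕ) :
    0 ≤ (truncPoly f b).coeff n := by
  rw [truncPoly_coeff]
  split_ifs
  · exact hf n
  · exact le_refl 0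

lemma LRup_trunc (p q : ℕ → ℝ) (hp : ∀ n, 0 ≤ p n) (hq : ∀ n, 0 ≤ q n)
    (h : LRup p q) (b : ℕ) :
    LRup (fun n => (truncPoly p b).coeff n) (fun n => (truncPoly q b).coeff n) := by
  intro i k l
  simp only [truncPoly_coeff]
  by_cases h1 : i + k + l ≤ b
  · by_cases h2 : i ≤ b
    · rw [if_pos h1, if_pos h2, if_pos (by omega), if_pos (by omega)]
      exact h i k l
    · rw [if_neg h2, mul_zero]
      apply mul_nonneg <;> (split_ifs <;> simp [hp, hq])
  · rw [if_neg h1, zero_mul]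
    apply mul_nonneg <;> (split_ifs <;> simp [hp, hq])

lemma coeff_prod_nonneg {ι : Type*} (t : Finset ι) (P : ι → Polynomial ℝ)
    (h : ∀ i ∈ t, ∀ n, 0 ≤ (P i).coeff n) : ∀ n, 0 ≤ (∏ i ∈ t, P i).coeff n := by
  refine Finset.prod_induction P (fun Q => ∀ n, 0 ≤ Q.coeff n) ?_ ?_ h
  · intro a b ha hb n
    rw [Polynomial.coeff_mul]
    exact Finset.sum_nonneg fun x _ => mul_nonneg (ha _) (hb _)
  · intro n
    rw [Polynomial.coeff_one]
    split_ifs <;> norm_num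

lemma LRup_one : LRup (fun n => (1 : Polynomial ℝ).coeff n) (fun n => (1 : Polynomial ℝ).coeff n) := by
  intro i k l
  simp only [Polynomial.coeff_one]
  split_ifs <;> try norm_num
  all_goals omega

lemma LRup_prod {ι : Type*} (t : Finset ι) (P₁ P₂ : ι → Polynomial ℝ)
    (h1 : ∀ i, ∀ n, 0 ≤ (P₁ i).coeff n) (h2 : ∀ i, ∀ n, 0 ≤ (P₂ i).coeff n)
    (h : ∀ i, LRup (fun n => (P₁ i).coeff n) (fun n => (P₂ i).coeff n)) :
    LRup (fun n => (∏ i ∈ t, P₁ i).coeff n) (fun n => (∏ i ∈ t, P₂ i).coeff n) := by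
  classical
  induction t using Finset.induction_on with
  | empty => simpa using LRup_one
  | insert _ _ ha ih =>
    rename_i a t'
    rw [Finset.prod_insert ha, Finset.prod_insert ha]
    set B : ℕ := (P₁ a).natDegree ⊔ (P₂ a).natDegree ⊔ (∏ i ∈ t', P₁ i).natDegree
        ⊔ (∏ i ∈ t', P₂ i).natDegree with hB
    have key := conv_LRup (fun n => (P₁ a).coeff n) (fun n => (P₂ a).coeff n)
      (fun n => (∏ i ∈ t', P₁ i).coeff n) (fun n => (∏ i ∈ t', P₂ i).coeff n) B
      (h1 a) (h2 a)
      (coeff_prod_nonneg t' P₁ (fun i _ => h1 i)) (coeff_prod_nonneg t' P₂ (fun i _ => h2 i))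
      (fun n hn => Polynomial.coeff_eq_zero_of_natDegree_lt (by omega))
      (fun n hn => Polynomial.coeff_eq_zero_of_natDegree_lt (by omega))
      (fun n hn => Polynomial.coeff_eq_zero_of_natDegree_lt (by omega))
      (fun n hn => Polynomial.coeff_eq_zero_of_natDegree_lt (by omega))
      (h a) ih
    intro i k l
    dsimp only
    rw [Polynomial.coeff_mul, Polynomial.coeff_mul, Polynomial.coeff_mul, Polynomial.coeff_mul]
    exact key i k l

lemma bridge {ι : Type*} [Fintype ι] (m : ι → ℕ → ℝ) (b : ℕ) (W : ℕ → ℝ) :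
    ∑' x : ι → ℕ, (if (∑ i, x i) ≤ b then W (∑ i, x i) * ∏ i, m i (x i) else 0)
      = ∑ n ∈ Finset.range (b+1), W n * (∏ i, truncPoly (m i) b).coeff n := by
  classical
  rw [tsum_eq_sum (s := Fintype.piFinset fun _ : ι => Finset.range (b+1)) ?_]
  · -- main finite computation
    have step1 : ∀ x ∈ Fintype.piFinset fun _ : ι => Finset.range (b+1),
        (if (∑ i, x i) ≤ b then W (∑ i, x i) * ∏ i, m i (x i) else 0)
          = ∑ n ∈ Finset.range (b+1), (if (∑ i, x i) = n then W n * ∏ i, m i (x i) else 0) := by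
      intro x _
      rw [Finset.sum_ite_eq (Finset.range (b+1)) (∑ i, x i) (fun n => W n * ∏ i, m i (x i))]
      simp [Nat.lt_succ_iff]
    rw [Finset.sum_congr rfl step1, Finset.sum_comm]
    refine Finset.sum_congr rfl (fun n _ => ?_)
    have coeffEq : (∏ i, truncPoly (m i) b).coeff n
        = ∑ x ∈ Fintype.piFinset fun _ : ι => Finset.range (b+1),
            (if (∑ i, x i) = n then ∏ i, m i (x i) else 0) := by
      have e1 : ∏ i, truncPoly (m i) b
          = ∑ x ∈ Fintype.piFinset fun _ : ι => Finset.range (b+1),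
              Polynomial.C (∏ i, m i (x i)) * Polynomial.X ^ (∑ i, x i) := by
        unfold truncPoly
        rw [Finset.prod_univ_sum]
        refine Finset.sum_congr rfl (fun x _ => ?_)
        rw [Finset.prod_mul_distrib, ← map_prod, Finset.prod_pow_eq_pow_sum]
      rw [e1, Polynomial.finset_sum_coeff]
      refine Finset.sum_congr rfl (fun x _ => ?_)
      rw [Polynomial.coeff_C_mul, Polynomial.coeff_X_pow]
      by_cases h : (∑ i, x i) = n
      · rw [if_pos h, if_pos h.symm, mul_one]
      · rw [if_neg h, if_neg (fun hh => h hh.symm), mul_zero]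
    rw [coeffEq, Finset.mul_sum]
    refine Finset.sum_congr rfl (fun x _ => ?_)
    rw [mul_ite, mul_zero]
  · -- vanishing outside
    intro x hx
    rw [Fintype.mem_piFinset] at hx
    push_neg at hx
    obtain ⟨i, hi⟩ := hx
    rw [Finset.mem_range] at hi
    push_neg at hi
    have : x i ≤ ∑ j, x j := Finset.single_le_sum (fun j _ => Nat.zero_le (x j)) (Finset.mem_univ i)
    rw [if_neg (by omega)]

theorem Dop_monotone {ι : Type*} [Fintype ι] (b : ℕ) (m₁ m₂ : ι → ℕ → ℝ)
    (h₁ : ∀ i, IsDist (m₁ i)) (h₂ : ∀ i, IsDist (m₂ i))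
    (h₁0 : ∀ i, 0 < m₁ i 0) (h₂0 : ∀ i, 0 < m₂ i 0)
    (h : ∀ i, LRup (m₁ i) (m₂ i)) :
    Dop b m₁ ≤ Dop b m₂ := by
  classical
  set u₁ : ℕ → ℝ := fun n => (∏ i, truncPoly (m₁ i) b).coeff n with hu₁
  set u₂ : ℕ → ℝ := fun n => (∏ i, truncPoly (m₂ i) b).coeff n with hu₂
  have hm₁0 : ∀ i n, 0 ≤ m₁ i n := fun i => (h₁ i).1
  have hm₂0 : ∀ i n, 0 ≤ m₂ i n := fun i => (h₂ i).1
  have hu₁0 : ∀ n, 0 ≤ u₁ n :=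
    coeff_prod_nonneg _ _ (fun i _ => truncPoly_coeff_nonneg _ _ (hm₁0 i))
  have hu₂0 : ∀ n, 0 ≤ u₂ n :=
    coeff_prod_nonneg _ _ (fun i _ => truncPoly_coeff_nonneg _ _ (hm₂0 i))
  have hLR : LRup u₁ u₂ := by
    apply LRup_prod Finset.univ (fun i => truncPoly (m₁ i) b) (fun i => truncPoly (m₂ i) b)
      (fun i => truncPoly_coeff_nonneg _ _ (hm₁0 i))
      (fun i => truncPoly_coeff_nonneg _ _ (hm₂0 i))
      (fun i => LRup_trunc _ _ (hm₁0 i) (hm₂0 i) (h i) b)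
  have hzero : ∀ (m : ι → ℕ → ℝ), (∏ i, truncPoly (m i) b).coeff 0 = ∏ i, m i 0 := by
    intro m
    rw [Polynomial.coeff_zero_eq_eval_zero, Polynomial.eval_prod]
    refine Finset.prod_congr rfl (fun i _ => ?_)
    rw [← Polynomial.coeff_zero_eq_eval_zero, truncPoly_coeff]
    simp
  have hZ₁ : 0 < ∑ n ∈ Finset.range (b+1), u₁ n := by
    have h0 : 0 < u₁ 0 := by
      rw [hu₁]; dsimp only; rw [hzero m₁]
      exact Finset.prod_pos (fun i _ => h₁0 i)
    have hle : u₁ 0 ≤ ∑ n ∈ Finset.range (b+1), u₁ n :=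
      Finset.single_le_sum (fun n _ => hu₁0 n) (Finset.mem_range.2 (by omega))
    linarith
  have hZ₂ : 0 < ∑ n ∈ Finset.range (b+1), u₂ n := by
    have h0 : 0 < u₂ 0 := by
      rw [hu₂]; dsimp only; rw [hzero m₂]
      exact Finset.prod_pos (fun i _ => h₂0 i)
    have hle : u₂ 0 ≤ ∑ n ∈ Finset.range (b+1), u₂ n :=
      Finset.single_le_sum (fun n _ => hu₂0 n) (Finset.mem_range.2 (by omega))
    linarith
  have hnum : ∀ (m : ι → ℕ → ℝ),
      (∑' x : ι → ℕ, if (∑ i, x i) ≤ b then ((∑ i, x i : ℕ) : ℝ) * ∏ i, m i (x i) else 0)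
        = ∑ n ∈ Finset.range (b+1), (n:ℝ) * (∏ i, truncPoly (m i) b).coeff n :=
    fun m => bridge m b (fun n => (n:ℝ))
  have hden : ∀ (m : ι → ℕ → ℝ),
      (∑' x : ι → ℕ, if (∑ i, x i) ≤ b then ∏ i, m i (x i) else 0)
        = ∑ n ∈ Finset.range (b+1), (∏ i, truncPoly (m i) b).coeff n := by
    intro m
    have e1 : (∑' x : ι → ℕ, if (∑ i, x i) ≤ b then ∏ i, m i (x i) else 0)
        = ∑' x : ι → ℕ, if (∑ i, x i) ≤ b then (1:ℝ) * ∏ i, m i (x i) else 0 := by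
      apply tsum_congr; intro x; rw [one_mul]
    rw [e1, bridge m b (fun _ => (1:ℝ))]
    refine Finset.sum_congr rfl (fun n _ => by rw [one_mul])
  unfold Dop
  rw [hnum m₁, hnum m₂, hden m₁, hden m₂]
  rw [div_le_div_iff₀ hZ₁ hZ₂]
  have hlr' : ∀ n m : ℕ, m ≤ n → u₁ n * u₂ m ≤ u₁ m * u₂ n := by
    intro n m hmn
    have := hLR m (n - m) 0
    rw [show m + (n - m) + 0 = n by omega, show m + 0 = m by omega,
      show m + (n - m) = n by omega] at this
    exact this
  exact mean_mono u₁ u₂ b hlr'
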